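/- Let A ≥ 2 be a real number, and assume that for all sufficiently large positive integers l and every integer b coprime to l there is a prime p ≡ b (mod l) with p < l·(log l)^A. Let ν be an even positive integer. Then for every ε > 0 and all sufficiently large real z the following holds: if L₁ and L₂ are squarefree positive integers, each of whose prime factors lies in the interval [(z/6)^{log z}, 2·z^{log z}·(log z)^{2A}], with gcd(L₁, L₂) = 1 and with L₁ having at least (z/(16·(log z)²))^{log z} distinct prime factors, then there exists a positive integer k ≤ 3·ν·z^A·(log z)^{2A} with gcd(k, ν·L₁·L₂) = 1 such that the number of primes p of the form p = d·k·ν + 1 with d ∣ L₁ and d having exactly ⌊z⌋ distinct prime factors is at least z^{z·log z − (2+ε)·z·log log z}. -/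

import Mathlib

open Real Filter Finset
set_option maxHeartbeats 1600000

theorem exists_k1_many_primes (A : ℝ) (hA : 2 ≤ A)
    (hHB : ∀ᶠ l : ℕ in Filter.atTop, ∀ b : ℕ, Nat.Coprime b l →
      ∃ p : ℕ, p.Prime ∧ p ≡ b [MOD l] ∧ (p : ℝ) < (l : ℝ) * (Real.log l) ^ A)
    (ν : ℕ) (hν : 0 < ν) (hνeven : Even ν) :
    ∀ ε > (0 : ℝ), ∀ᶠ z : ℝ in Filter.atTop, ∀ L₁ L₂ : ℕ,
      Squarefree L₁ → Squarefree L₂ →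
      (∀ p ∈ L₁.primeFactors,
        (z / 6) ^ Real.log z ≤ (p : ℝ) ∧
          (p : ℝ) ≤ 2 * z ^ Real.log z * (Real.log z) ^ (2 * A)) →
      (∀ p ∈ L₂.primeFactors,
        (z / 6) ^ Real.log z ≤ (p : ℝ) ∧
          (p : ℝ) ≤ 2 * z ^ Real.log z * (Real.log z) ^ (2 * A)) →
      Nat.gcd L₁ L₂ = 1 →
      (z / (16 * (Real.log z) ^ 2)) ^ Real.log z ≤ (L₁.primeFactors.card : ℝ) →
      ∃ k : ℕ, 0 < k ∧ (k : ℝ) ≤ 3 * ν * z ^ A * (Real.log z) ^ (2 * A) ∧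
        Nat.gcd k (ν * L₁ * L₂) = 1 ∧
        z ^ (z * Real.log z - (2 + ε) * z * Real.log (Real.log z)) ≤
          ((L₁.divisors.filter
            (fun d => d.primeFactors.card = ⌊z⌋₊ ∧ (d * k * ν + 1).Prime)).card : ℝ) := by
  classical
  obtain ⟨N, hN⟩ := Filter.eventually_atTop.mp hHB
  intro ε hε
  have hA0 : (0:ℝ) < A := by linarith
  set c : ℝ := 3 ^ (1/A) with hc_def
  have hc1 : 1 < c := by
    rw [hc_def, Real.one_lt_rpow_iff_of_pos (by norm_num)]
    left; exact ⟨by norm_num, by positivity⟩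
  have hν2 : 2 ≤ ν := by
    obtain ⟨r, rfl⟩ := hνeven; omega
  have hνR : (2:ℝ) ≤ (ν:ℝ) := by exact_mod_cast hν2
  have hlog3ν : 1 ≤ Real.log (3*(ν:ℝ)) := by
    rw [Real.le_log_iff_exp_le (by linarith)]
    have := Real.exp_one_lt_d9
    linarith
  have hlog6ν : 0 ≤ Real.log (6*(ν:ℝ)) := Real.log_nonneg (by linarith)
  have hlogν2 : 0 ≤ Real.log ((ν:ℝ)^2) := Real.log_nonneg (by nlinarith)
  have hlog2 : 0 < Real.log 2 := Real.log_pos (by norm_num)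
  have hlog16 : 0 < Real.log 16 := Real.log_pos (by norm_num)
  have hlog6 : 0 < Real.log 6 := Real.log_pos (by norm_num)
  -- eventual facts
  have ev1 : ∀ᶠ z : ℝ in atTop, (N:ℝ) ≤ z := eventually_ge_atTop _
  have ev2 : ∀ᶠ z : ℝ in atTop, (2:ℝ) ≤ z := eventually_ge_atTop _
  have ev3 : ∀ᶠ z : ℝ in atTop, 1 ≤ Real.log z :=
    Real.tendsto_log_atTop.eventually_ge_atTop 1
  have ev4 : ∀ᶠ z : ℝ in atTop,
      Real.log (6*(ν:ℝ)) + 3*A + Real.log 6 ≤ Real.log z :=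
    Real.tendsto_log_atTop.eventually_ge_atTop _
  have ev5 : ∀ᶠ z : ℝ in atTop,
      (Real.log 2 + Real.log ((ν:ℝ)^2) + 2*A)/(c-1) ≤ Real.log z :=
    Real.tendsto_log_atTop.eventually_ge_atTop _
  have ev6 : ∀ᶠ z : ℝ in atTop,
      (Real.log 16 + 2 + Real.log 2)/ε ≤ Real.log (Real.log z) := by
    have := (Real.tendsto_log_atTop.comp Real.tendsto_log_atTop).eventually_ge_atTop
      ((Real.log 16 + 2 + Real.log 2)/ε)
    exact this.mono fun z h => h
  have ev7 : ∀ᶠ z : ℝ in atTop,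
      (Real.log (3*(ν:ℝ)) + 3*A + 1) * Real.log z ≤ z := by
    set C := Real.log (3*(ν:ℝ)) + 3*A + 1 with hC
    have hCpos : 0 < C := by rw [hC]; linarith
    have h := (Real.isLittleO_log_id_atTop.def (c := C⁻¹) (by positivity))
    filter_upwards [h, eventually_ge_atTop (1:ℝ)] with z hz hz1
    simp only [id_eq, Real.norm_eq_abs] at hz
    rw [abs_of_nonneg (Real.log_nonneg hz1), abs_of_nonneg (by linarith)] at hz
    calc C * Real.log z ≤ C * (C⁻¹ * z) := by nlinarith
    _ = z := by field_simp
  have ev8 : ∀ᶠ z : ℝ in atTop, 16 * Real.exp 1 ^ 2 * (Real.log z)^2 ≤ z := by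
    have h := (isLittleO_log_rpow_atTop (by norm_num : (0:ℝ) < 1/2)).def
        (c := (4*Real.exp 1)⁻¹) (by positivity)
    filter_upwards [h, eventually_ge_atTop (1:ℝ)] with z hz hz1
    have hz0 : (0:ℝ) < z := by linarith
    rw [Real.norm_eq_abs, Real.norm_eq_abs, abs_of_nonneg (Real.log_nonneg hz1),
      abs_of_nonneg (Real.rpow_nonneg hz0.le _)] at hz
    have hsq : (z ^ (1/2:ℝ))^2 = z := by
      rw [← Real.rpow_natCast (z ^ (1/2:ℝ)) 2, ← Real.rpow_mul hz0.le]; norm_num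
    have h2 : (Real.log z)^2 ≤ ((4*Real.exp 1)⁻¹)^2 * (z ^ (1/2:ℝ))^2 := by
      rw [← mul_pow]; exact pow_le_pow_left₀ (Real.log_nonneg hz1) hz 2
    rw [hsq] at h2
    have he : ((4*Real.exp 1)⁻¹)^2 * (16 * Real.exp 1 ^2) = 1 := by
      rw [inv_pow, mul_pow]; field_simp; ring
    nlinarith [sq_nonneg (Real.log z), Real.exp_pos 1]
  filter_upwards [ev1, ev2, ev3, ev4, ev5, ev6, ev7, ev8] with z hzN hz2 hu1 hC3 hC4' hC5' hC6' h16e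
  intro L₁ L₂ hsf1 hsf2 hP1 hP2 hgcd12 hn
  set u := Real.log z with hu_def
  set v := Real.log u with hv_def
  have hz1 : (1:ℝ) ≤ z := by linarith
  have hz0 : (0:ℝ) < z := by linarith
  have hu0 : (0:ℝ) < u := by linarith
  have hv0 : (0:ℝ) ≤ v := Real.log_nonneg hu1
  have hvu : v ≤ u := by
    have := Real.log_le_sub_one_of_pos hu0
    linarith
  set m := ⌊z⌋₊ with hm_def
  have hm1 : 1 ≤ m := Nat.le_floor (by exact_mod_cast hz1)
  have hmz : (m:ℝ) ≤ z := Nat.floor_le hz0.le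
  have hzm : z - 1 ≤ (m:ℝ) := by
    rw [hm_def]
    have := Nat.lt_floor_add_one z; linarith
  have hL1 : L₁ ≠ 0 := hsf1.ne_zero
  have hzA1 : (1:ℝ) ≤ z^A := Real.one_le_rpow hz1 hA0.le
  have hu2A1 : (1:ℝ) ≤ u^(2*A) := Real.one_le_rpow hu1 (by positivity)
  have hK'1 : (1:ℝ) ≤ 3*(ν:ℝ)*z^A*u^(2*A) := by
    have w1 : (1:ℝ)*1 ≤ z^A*u^(2*A) :=
      mul_le_mul hzA1 hu2A1 zero_le_one (by positivity)
    have w2 : (1:ℝ)*1 ≤ (ν:ℝ)*(z^A*u^(2*A)) :=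
      mul_le_mul (by linarith only [hνR]) (by linarith only [w1]) zero_le_one (by linarith only [hνR])
    linarith only [w2]
  have hzle6 : Real.exp 1 ≤ z/6 := by
    have hu6 : 6 ≤ u := by linarith only [hlog6ν, hlog6, hC3, hA]
    have hz_eq : z = Real.exp u := by rw [hu_def, Real.exp_log hz0]
    have h6z : Real.exp 6 ≤ z := by rw [hz_eq]; exact Real.exp_le_exp.mpr hu6
    have h5 : (6:ℝ) ≤ Real.exp 5 := by
      have := Real.add_one_le_exp (5:ℝ); linarith
    have hexp6 : 6 * Real.exp 1 ≤ Real.exp 6 := by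
      calc 6 * Real.exp 1 ≤ Real.exp 5 * Real.exp 1 :=
            mul_le_mul_of_nonneg_right h5 (Real.exp_pos 1).le
      _ = Real.exp 6 := by rw [← Real.exp_add]; norm_num
    linarith
  have hzle : z ≤ (z/6)^u := by
    calc z = Real.exp 1 ^ u := by rw [Real.exp_one_rpow, hu_def, Real.exp_log hz0]
    _ ≤ (z/6)^u := Real.rpow_le_rpow (Real.exp_pos 1).le hzle6 hu0.le
  have hE4 : 3*(ν:ℝ)*z^A*u^(2*A) + 1 ≤ (z/6)^u := by
    have h6pos : (0:ℝ) < z/6 := by linarith [Real.exp_pos 1]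
    have hXlog : Real.log (6*(ν:ℝ)*(z^A)*(u^(2*A))) = Real.log (6*(ν:ℝ)) + A*u + 2*A*v := by
      rw [Real.log_mul (by positivity) (by positivity),
        Real.log_mul (by positivity) (by positivity),
        Real.log_rpow hz0, Real.log_rpow hu0, ← hu_def, ← hv_def]
    have hmid : Real.log (6*(ν:ℝ)) + A*u + 2*A*v ≤ u * Real.log (z/6) := by
      rw [Real.log_div (ne_of_gt hz0) (by norm_num), ← hu_def]
      have t1 := mul_le_mul_of_nonneg_right hC3 hu0.le
      have t2 : 0 ≤ Real.log (6*(ν:ℝ)) * (u-1) := mul_nonneg hlog6ν (by linarith)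
      have t3 := mul_le_mul_of_nonneg_left hvu (by linarith : (0:ℝ) ≤ 2*A)
      linarith only [t1, t2, t3]
    have e1 : 6*(ν:ℝ)*(z^A)*(u^(2*A)) = Real.exp (Real.log (6*(ν:ℝ)) + A*u + 2*A*v) := by
      rw [← hXlog, Real.exp_log (by positivity)]
    have e2 : (z/6)^u = Real.exp (u * Real.log (z/6)) := by
      rw [Real.rpow_def_of_pos h6pos, mul_comm]
    have hle : 6*(ν:ℝ)*(z^A)*(u^(2*A)) ≤ (z/6)^u := by
      rw [e1, e2]; exact Real.exp_le_exp.mpr hmid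
    linarith only [hK'1, hle]
  -- the per-divisor construction
  set S : Finset ℕ := L₁.divisors.filter (fun d => d.primeFactors.card = m) with hS_def
  have hP : ∀ d ∈ S, ∃ k : ℕ, 0 < k ∧ (k:ℝ) ≤ 3*(ν:ℝ)*z^A*u^(2*A) ∧
      Nat.gcd k (ν*L₁*L₂) = 1 ∧ (d*k*ν+1).Prime := by
    intro d hd
    rw [hS_def, Finset.mem_filter, Nat.mem_divisors] at hd
    obtain ⟨⟨hdvd, _⟩, hω⟩ := hd
    have hd0 : 0 < d := Nat.pos_of_dvd_of_pos hdvd (Nat.pos_of_ne_zero hL1)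
    have hne : d.primeFactors.Nonempty := Finset.card_pos.mp (by rw [hω]; exact hm1)
    obtain ⟨q, hq⟩ := hne
    have hqL : q ∈ L₁.primeFactors := Nat.primeFactors_mono hdvd hL1 hq
    have hq_low : (z/6)^u ≤ (q:ℝ) := (hP1 q hqL).1
    have hqd : q ≤ d := Nat.le_of_dvd hd0 (Nat.dvd_of_mem_primeFactors hq)
    have hd_low : (z/6)^u ≤ (d:ℝ) := hq_low.trans (by exact_mod_cast hqd)
    have hdN : N ≤ d := by
      have : (N:ℝ) ≤ (d:ℝ) := hzN.trans (hzle.trans hd_low)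
      exact_mod_cast this
    have hl : N ≤ d * ν^2 := hdN.trans (Nat.le_mul_of_pos_right _ (pow_pos hν 2))
    have hb : Nat.Coprime (d*ν+1) (d*ν^2) := by
      have h1 : Nat.Coprime (d*ν+1) (d*ν) := by
        simpa using Nat.coprime_succ_self_left (n := d*ν)
      have hdd : d*ν^2 ∣ (d*ν)*(d*ν) := ⟨d, by ring⟩
      exact Nat.Coprime.coprime_dvd_right hdd (h1.mul_right h1)
    obtain ⟨p, hp, hmod, hplt⟩ := hN (d*ν^2) hl (d*ν+1) hb
    have hblt : d*ν+1 < d*ν^2 := by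
      have h1 : 2 ≤ d*ν := le_trans (by norm_num) (Nat.mul_le_mul hd0 hν2)
      calc d*ν+1 < d*ν + d*ν := by omega
      _ = d*ν*2 := by ring
      _ ≤ d*ν*ν := Nat.mul_le_mul_left _ hν2
      _ = d*ν^2 := by ring
    have hmod' : p % (d*ν^2) = d*ν+1 := by
      have h0 : p % (d*ν^2) = (d*ν+1) % (d*ν^2) := hmod
      rwa [Nat.mod_eq_of_lt hblt] at h0
    have hpt : p = d*ν^2*(p / (d*ν^2)) + (d*ν+1) := by
      conv_lhs => rw [← Nat.div_add_mod p (d*ν^2)]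
      rw [hmod']
    set t := p / (d*ν^2) with ht_def
    have hkeq : d*(ν*t+1)*ν + 1 = p := by rw [hpt]; ring
    -- upper bound on d
    have hsd : Squarefree d := hsf1.squarefree_of_dvd hdvd
    have hd_up : (d:ℝ) ≤ (2*z^u*u^(2*A))^m := by
      have hprod : (d:ℝ) = ∏ p ∈ d.primeFactors, (p:ℝ) := by
        rw [← Nat.cast_prod, Nat.prod_primeFactors_of_squarefree hsd]
      rw [hprod, ← hω]
      calc ∏ p ∈ d.primeFactors, (p:ℝ) ≤ ∏ p ∈ d.primeFactors, (2*z^u*u^(2*A)) := by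
            apply Finset.prod_le_prod (fun p _ => by positivity)
            exact fun p hp => (hP1 p (Nat.primeFactors_mono hdvd hL1 hp)).2
      _ = (2*z^u*u^(2*A))^d.primeFactors.card := by rw [Finset.prod_const]
    have hlogl : Real.log ((d*ν^2 : ℕ):ℝ) ≤ c*z*u^2 := by
      have hc4 : Real.log 2 + Real.log ((ν:ℝ)^2) + 2*A ≤ (c-1)*u := by
        rw [div_le_iff₀ (by linarith)] at hC4'
        linarith only [hC4']
      have hlogd : Real.log (d:ℝ) ≤ (m:ℝ) * (Real.log 2 + u*u + 2*A*v) := by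
        have h1 : Real.log (d:ℝ) ≤ Real.log ((2*z^u*u^(2*A))^m) :=
          Real.log_le_log (by exact_mod_cast hd0) hd_up
        rw [Real.log_pow,
          Real.log_mul (mul_pos two_pos (Real.rpow_pos_of_pos hz0 u)).ne'
            (Real.rpow_pos_of_pos hu0 _).ne',
          Real.log_mul (by norm_num : (2:ℝ) ≠ 0) (Real.rpow_pos_of_pos hz0 u).ne',
          Real.log_rpow hz0, Real.log_rpow hu0, ← hu_def, ← hv_def] at h1
        linarith only [h1]
      have hcast : Real.log ((d*ν^2 : ℕ):ℝ) = Real.log (d:ℝ) + Real.log ((ν:ℝ)^2) := by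
        push_cast
        rw [Real.log_mul (by exact_mod_cast hd0.ne') (by positivity)]
      rw [hcast]
      have hlogB0 : (0:ℝ) ≤ Real.log 2 + u*u + 2*A*v := by
        have w1 : (0:ℝ) ≤ u*u := mul_nonneg hu0.le hu0.le
        have w2 : (0:ℝ) ≤ 2*A*v := mul_nonneg (mul_nonneg (by norm_num) hA0.le) hv0
        linarith only [hlog2, w1, w2]
      have h2 : (m:ℝ) * (Real.log 2 + u*u + 2*A*v) ≤ z * (Real.log 2 + u*u + 2*A*v) :=
        mul_le_mul_of_nonneg_right hmz hlogB0
      have hw : Real.log 2 + 2*A*v + Real.log ((ν:ℝ)^2) ≤ (c-1)*u^2 := by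
        have t1 := mul_le_mul_of_nonneg_right hc4 hu0.le
        have t2 : 0 ≤ Real.log 2 * (u-1) := mul_nonneg hlog2.le (by linarith)
        have t3 : 0 ≤ Real.log ((ν:ℝ)^2) * (u-1) := mul_nonneg hlogν2 (by linarith)
        have t4 := mul_le_mul_of_nonneg_left hvu (by linarith : (0:ℝ) ≤ 2*A)
        linarith only [t1, t2, t3, t4]
      have h3 : z*(Real.log 2 + 2*A*v) + Real.log ((ν:ℝ)^2) ≤ (c-1)*z*u^2 := by
        have t2 := mul_le_mul_of_nonneg_left hw hz0.le
        have t3 : Real.log ((ν:ℝ)^2) ≤ z*Real.log ((ν:ℝ)^2) := le_mul_of_one_le_left hlogν2 hz1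
        linarith only [t2, t3]
      linarith only [hlogd, h2, h3]
    have hloglpos : (0:ℝ) ≤ Real.log ((d*ν^2 : ℕ):ℝ) := by
      apply Real.log_nonneg
      have h1 : 0 < d*ν^2 := Nat.mul_pos hd0 (pow_pos hν 2)
      exact_mod_cast h1
    have hpowA : (Real.log ((d*ν^2 : ℕ):ℝ))^A ≤ 3*z^A*u^(2*A) := by
      have h1 : (Real.log ((d*ν^2 : ℕ):ℝ))^A ≤ (c*z*u^2)^A :=
        Real.rpow_le_rpow hloglpos hlogl hA0.le
      have h2 : (c*z*u^2)^A = 3*z^A*u^(2*A) := by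
        rw [Real.mul_rpow (by positivity) (by positivity),
          Real.mul_rpow (by positivity) (by positivity)]
        have hcA : c^A = 3 := by
          rw [hc_def, ← Real.rpow_mul (by norm_num : (0:ℝ) ≤ 3),
            one_div_mul_cancel hA0.ne', Real.rpow_one]
        have huA : (u^2)^A = u^(2*A) := by
          rw [← Real.rpow_natCast u 2, ← Real.rpow_mul hu0.le]
          norm_num
        rw [hcA, huA]
      linarith [h1, h2.le, h2.ge]
    -- bound on k
    have hk_lt : ((ν*t+1 : ℕ):ℝ) < (ν:ℝ) * (Real.log ((d*ν^2:ℕ):ℝ))^A := by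
      have hcast2 : ((d:ℝ))*(ν:ℝ)*((ν*t+1 : ℕ):ℝ) + 1 = (p:ℝ) := by
        have h := congrArg (Nat.cast : ℕ → ℝ) hkeq
        push_cast at h ⊢
        linear_combination h
      have hlcast : ((d*ν^2 : ℕ):ℝ) = (d:ℝ)*(ν:ℝ)^2 := by push_cast; ring
      have hdν : (0:ℝ) < (d:ℝ)*(ν:ℝ) := by
        have hdR : (0:ℝ) < (d:ℝ) := by exact_mod_cast hd0
        exact mul_pos hdR (by linarith only [hνR])
      have hmul : (d:ℝ)*(ν:ℝ)*((ν*t+1 : ℕ):ℝ) <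
          (d:ℝ)*(ν:ℝ)*((ν:ℝ)*(Real.log ((d*ν^2:ℕ):ℝ))^A) := by
        have hplt' : (p:ℝ) < (d:ℝ)*(ν:ℝ)^2 * (Real.log ((d*ν^2:ℕ):ℝ))^A := by
          calc (p:ℝ) < ((d*ν^2:ℕ):ℝ) * (Real.log ((d*ν^2:ℕ):ℝ))^A := hplt
          _ = (d:ℝ)*(ν:ℝ)^2 * (Real.log ((d*ν^2:ℕ):ℝ))^A := by rw [hlcast]
        linarith only [hplt', hcast2]
      exact lt_of_mul_lt_mul_left hmul hdν.le
    have hk_le : ((ν*t+1 : ℕ):ℝ) ≤ 3*(ν:ℝ)*z^A*u^(2*A) := by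
      have h1 : (ν:ℝ) * (Real.log ((d*ν^2:ℕ):ℝ))^A ≤ (ν:ℝ) * (3*z^A*u^(2*A)) :=
        mul_le_mul_of_nonneg_left hpowA (by positivity)
      calc ((ν*t+1 : ℕ):ℝ) ≤ (ν:ℝ) * (Real.log ((d*ν^2:ℕ):ℝ))^A := hk_lt.le
      _ ≤ (ν:ℝ) * (3*z^A*u^(2*A)) := h1
      _ = 3*(ν:ℝ)*z^A*u^(2*A) := by ring
    -- coprimality
    have hcop_ν : Nat.Coprime (ν*t+1) ν :=
      Nat.Coprime.coprime_dvd_right (dvd_mul_right ν t)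
        (by simpa using Nat.coprime_succ_self_left (n := ν*t))
    have hcopM : ∀ M : ℕ, Squarefree M → (∀ r ∈ M.primeFactors, (z/6)^u ≤ (r:ℝ)) →
        Nat.Coprime (ν*t+1) M := by
      intro M hsfM hPM
      by_contra hcon
      obtain ⟨r, hr, hrk, hrM⟩ := Nat.Prime.not_coprime_iff_dvd.mp hcon
      have hrM' : r ∈ M.primeFactors := Nat.mem_primeFactors.mpr ⟨hr, hrM, hsfM.ne_zero⟩
      have h1 : (z/6)^u ≤ (r:ℝ) := hPM r hrM'
      have h2 : r ≤ ν*t+1 := Nat.le_of_dvd (Nat.succ_pos _) hrk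
      have h2' : (r:ℝ) ≤ ((ν*t+1:ℕ):ℝ) := by exact_mod_cast h2
      linarith only [hk_le, hE4, h1, h2']
    have hfinal : Nat.Coprime (ν*t+1) (ν*L₁*L₂) :=
      Nat.Coprime.mul_right
        (Nat.Coprime.mul_right hcop_ν (hcopM L₁ hsf1 (fun r hr => (hP1 r hr).1)))
        (hcopM L₂ hsf2 (fun r hr => (hP2 r hr).1))
    exact ⟨ν*t+1, Nat.succ_pos _, hk_le, hfinal, by rwa [hkeq]⟩
  -- lower bound on S.card via binomial coefficients
  set n := L₁.primeFactors.card with hn_def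
  have hSpf : Nat.choose n m ≤ S.card := by
    rw [hn_def, ← Finset.card_powersetCard]
    apply Finset.card_le_card_of_injOn (fun s => ∏ p ∈ s, p)
    · intro s hs
      rw [Finset.mem_coe, Finset.mem_powersetCard] at hs
      obtain ⟨hsub, hcard⟩ := hs
      have hpr : ∀ p ∈ s, p.Prime := fun p hp => Nat.prime_of_mem_primeFactors (hsub hp)
      rw [Finset.mem_coe, hS_def, Finset.mem_filter, Nat.mem_divisors]
      refine ⟨⟨Finset.prod_primes_dvd L₁ (fun p hp => (hpr p hp).prime)
        (fun p hp => Nat.dvd_of_mem_primeFactors (hsub hp)), hL1⟩, ?_⟩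
      rw [Nat.primeFactors_prod hpr, hcard]
    · intro s hs t ht hst
      simp only [Finset.mem_coe, Finset.mem_powersetCard] at hs ht
      dsimp only at hst
      have hprs : ∀ p ∈ s, p.Prime := fun p hp => Nat.prime_of_mem_primeFactors (hs.1 hp)
      have hprt : ∀ p ∈ t, p.Prime := fun p hp => Nat.prime_of_mem_primeFactors (ht.1 hp)
      have e1 := Nat.primeFactors_prod hprs
      have e2 := Nat.primeFactors_prod hprt
      rw [← e1, ← e2, hst]
  -- the base of the counting estimate
  have hN0 : z*z ≤ (z/(16*u^2))^u := by
    have hb : Real.exp 1 * Real.exp 1 ≤ z/(16*u^2) := by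
      rw [le_div_iff₀ (by positivity)]
      linarith only [h16e, sq_nonneg (Real.exp 1), Real.exp_pos 1, sq_nonneg u]
    have hez : Real.exp 1 ^ u = z := by rw [Real.exp_one_rpow, hu_def, Real.exp_log hz0]
    calc z*z = Real.exp 1 ^ u * Real.exp 1 ^ u := by rw [hez]
    _ = (Real.exp 1 * Real.exp 1)^u :=
      (Real.mul_rpow (Real.exp_pos 1).le (Real.exp_pos 1).le).symm
    _ ≤ (z/(16*u^2))^u := Real.rpow_le_rpow (by positivity) hb hu0.le
  have hbase0 : (0:ℝ) < z/(16*u^2) := by positivity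
  have hN0pos : (0:ℝ) < (z/(16*u^2))^u := Real.rpow_pos_of_pos hbase0 u
  have hX1 : (1:ℝ) ≤ (z/(16*u^2))^u / (2*z) := by
    rw [le_div_iff₀ (by positivity)]
    have hzz : 2*z ≤ z*z := by nlinarith only [hz2]
    linarith only [hN0, hzz]
  have hXpos : (0:ℝ) < (z/(16*u^2))^u / (2*z) := by positivity
  have hmn : m ≤ n := by
    have hzz : z ≤ z*z := by nlinarith only [hz2]
    have h1 : (m:ℝ) ≤ (n:ℝ) := by linarith only [hmz, hn, hN0, hzz]
    exact_mod_cast h1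
  have hchoose : ((z/(16*u^2))^u/(2*z)) ^ (z-1) ≤ (Nat.choose n m : ℝ) := by
    have hm0R : (0:ℝ) < (m:ℝ) := by exact_mod_cast hm1
    have hcast : ((n+1-m:ℕ):ℝ) = (n:ℝ)+1-(m:ℝ) := by
      have hm' : m ≤ n+1 := by omega
      push_cast [hm']
      ring
    have h1 : ((z/(16*u^2))^u/(2*z)) ^ (z-1) ≤ ((z/(16*u^2))^u/(2*z)) ^ ((m:ℕ):ℝ) :=
      Real.rpow_le_rpow_of_exponent_le hX1 (by exact_mod_cast hzm)
    rw [Real.rpow_natCast] at h1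
    have hXle : (z/(16*u^2))^u/(2*z) ≤ ((n+1-m:ℕ):ℝ)/(m:ℝ) := by
      rw [div_le_div_iff₀ (by positivity) hm0R, hcast]
      have e1 : (z/(16*u^2))^u * m ≤ (n:ℝ)*z :=
        mul_le_mul hn hmz (by positivity) (by positivity)
      have hzz : 2*z ≤ z*z := by nlinarith only [hz2]
      have hnm2 : 2*(m:ℝ) ≤ (n:ℝ) := by linarith only [hzz, hN0, hn, hmz]
      have t : (2*(m:ℝ))*z ≤ (n:ℝ)*z := mul_le_mul_of_nonneg_right hnm2 hz0.le
      linarith only [e1, t, hz0.le]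
    have h2 : ((z/(16*u^2))^u/(2*z))^m ≤ (((n+1-m:ℕ):ℝ)/(m:ℝ))^m :=
      pow_le_pow_left₀ hXpos.le hXle m
    have h3 : (((n+1-m:ℕ):ℝ)/(m:ℝ))^m ≤ (Nat.choose n m : ℝ) := by
      have hfac : (Nat.factorial m : ℝ) ≤ (m:ℝ)^m := by exact_mod_cast Nat.factorial_le_pow m
      have hple := Nat.pow_le_choose (α := ℝ) m n
      have hnum : (0:ℝ) ≤ ((n+1-m:ℕ):ℝ)^m := by positivity
      have hfacpos : (0:ℝ) < (Nat.factorial m : ℝ) := by exact_mod_cast Nat.factorial_pos m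
      calc (((n+1-m:ℕ):ℝ)/(m:ℝ))^m = ((n+1-m:ℕ):ℝ)^m/(m:ℝ)^m := div_pow _ _ m
      _ ≤ ((n+1-m:ℕ):ℝ)^m/(Nat.factorial m : ℝ) := by gcongr
      _ ≤ (Nat.choose n m : ℝ) := hple
    calc ((z/(16*u^2))^u/(2*z)) ^ (z-1) ≤ ((z/(16*u^2))^u/(2*z))^m := h1
    _ ≤ (((n+1-m:ℕ):ℝ)/(m:ℝ))^m := h2
    _ ≤ (Nat.choose n m : ℝ) := h3
  -- main log inequality
  have hKpos1 : (0:ℝ) < 3*(ν:ℝ)*z^A*u^(2*A) := by linarith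
  have hKmain : (3*(ν:ℝ)*z^A*u^(2*A)) * z^(z*u - (2+ε)*z*v) ≤
      ((z/(16*u^2))^u/(2*z)) ^ (z-1) := by
    have hLpos : (0:ℝ) < (3*(ν:ℝ)*z^A*u^(2*A)) * z^(z*u-(2+ε)*z*v) :=
      mul_pos hKpos1 (Real.rpow_pos_of_pos hz0 _)
    have hRpos : (0:ℝ) < ((z/(16*u^2))^u/(2*z)) ^ (z-1) :=
      Real.rpow_pos_of_pos hXpos _
    rw [← Real.log_le_log_iff hLpos hRpos]
    have hl1 : Real.log ((3*(ν:ℝ)*z^A*u^(2*A)) * z^(z*u-(2+ε)*z*v))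
        = Real.log (3*(ν:ℝ)) + A*u + 2*A*v + (z*u-(2+ε)*z*v)*u := by
      rw [Real.log_mul (ne_of_gt hKpos1) (ne_of_gt (Real.rpow_pos_of_pos hz0 _)),
        Real.log_mul (by positivity) (by positivity),
        Real.log_mul (by positivity) (by positivity),
        Real.log_rpow hz0, Real.log_rpow hu0, Real.log_rpow hz0, ← hu_def, ← hv_def]
    have hl2 : Real.log (((z/(16*u^2))^u/(2*z)) ^ (z-1))
        = (z-1) * (u*(u - (Real.log 16 + 2*v)) - (Real.log 2 + u)) := by
      rw [Real.log_rpow hXpos,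
        Real.log_div (ne_of_gt hN0pos) (by positivity),
        Real.log_rpow hbase0,
        Real.log_div (ne_of_gt hz0) (by positivity),
        Real.log_mul (by norm_num) (by positivity),
        Real.log_pow,
        Real.log_mul (by norm_num) (ne_of_gt hz0), ← hu_def, ← hv_def]
      push_cast
      ring
    rw [hl1, hl2]
    have hεv : Real.log 16 + 2 + Real.log 2 ≤ ε*v := by
      rw [div_le_iff₀ hε] at hC5'
      linarith only [hC5']
    have hs1 : u ≤ ε*u*v - u*Real.log 16 - Real.log 2 - u := by
      have t1 := mul_le_mul_of_nonneg_left hεv hu0.le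
      have t2 : Real.log 2 ≤ u * Real.log 2 := le_mul_of_one_le_left hlog2.le hu1
      linarith only [t1, t2]
    have hs2 := mul_le_mul_of_nonneg_left hs1 hz0.le
    have hs3 : u^2 + Real.log (3*(ν:ℝ)) + A*u + 2*A*v ≤ (1 + Real.log (3*(ν:ℝ)) + 3*A)*u^2 := by
      have hu2 : (1:ℝ) ≤ u^2 := by nlinarith only [hu1]
      have hu2' : u ≤ u^2 := by nlinarith only [hu1]
      have t3 : Real.log (3*(ν:ℝ))*1 ≤ Real.log (3*(ν:ℝ))*u^2 :=
        mul_le_mul_of_nonneg_left hu2 (by linarith only [hlog3ν])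
      have t4 : A*u ≤ A*u^2 := mul_le_mul_of_nonneg_left hu2' hA0.le
      have t5 : 2*A*v ≤ 2*A*u^2 :=
        mul_le_mul_of_nonneg_left (hvu.trans hu2') (by linarith only [hA0])
      linarith only [t3, t4, t5]
    have hs4 : (1 + Real.log (3*(ν:ℝ)) + 3*A)*u^2 ≤ z*u := by
      have t6 := mul_le_mul_of_nonneg_right hC6' hu0.le
      linarith only [t6]
    linarith only [hs2, hs3, hs4, mul_nonneg hu0.le hlog16.le,
      mul_nonneg (mul_nonneg hu0.le hv0) (by norm_num : (0:ℝ) ≤ 2), hlog2.le, hu0.le]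
  -- pigeonhole
  set tgt := z ^ (z*u - (2+ε)*z*v) with htgt_def
  have htgtpos : 0 < tgt := Real.rpow_pos_of_pos hz0 _
  set K := ⌊(3:ℝ)*(ν:ℝ)*z^A*u^(2*A)⌋₊ with hK_def
  have hK1 : 1 ≤ K := Nat.le_floor (by exact_mod_cast hK'1)
  choose! f hf1 hf2 hf3 hf4 using hP
  have hfmem : ∀ d ∈ S, f d ∈ Finset.Icc 1 K := fun d hd =>
    Finset.mem_Icc.mpr ⟨hf1 d hd, Nat.le_floor (hf2 d hd)⟩
  have hcardsum := Finset.card_eq_sum_card_fiberwise hfmem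
  have hKK' : (K:ℝ) ≤ 3*(ν:ℝ)*z^A*u^(2*A) := Nat.floor_le hKpos1.le
  have hKtgt : (K:ℝ) * tgt ≤ (S.card : ℝ) := by
    have h1 : (K:ℝ)*tgt ≤ (3*(ν:ℝ)*z^A*u^(2*A))*tgt :=
      mul_le_mul_of_nonneg_right hKK' htgtpos.le
    have h2 : ((Nat.choose n m : ℕ):ℝ) ≤ (S.card:ℝ) := by exact_mod_cast hSpf
    calc (K:ℝ)*tgt ≤ (3*(ν:ℝ)*z^A*u^(2*A))*tgt := h1
    _ ≤ ((z/(16*u^2))^u/(2*z)) ^ (z-1) := hKmain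
    _ ≤ (Nat.choose n m : ℝ) := hchoose
    _ ≤ (S.card:ℝ) := h2
  have hex : ∃ k ∈ Finset.Icc 1 K, tgt ≤ ((S.filter fun d => f d = k).card : ℝ) := by
    by_contra hcon
    push_neg at hcon
    have hlt : (S.card : ℝ) < (K:ℝ) * tgt := by
      calc (S.card:ℝ) = ∑ k ∈ Finset.Icc 1 K, ((S.filter fun d => f d = k).card : ℝ) := by
            rw [hcardsum]; push_cast; rfl
      _ < ∑ _k ∈ Finset.Icc 1 K, tgt :=
            Finset.sum_lt_sum_of_nonempty ⟨1, Finset.mem_Icc.mpr ⟨le_refl 1, hK1⟩⟩ hcon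
      _ = ((Finset.Icc 1 K).card : ℝ) * tgt := by rw [Finset.sum_const, nsmul_eq_mul]
      _ = (K:ℝ)*tgt := by rw [Nat.card_Icc]; norm_num
    linarith only [hlt, hKtgt]
  obtain ⟨k, hkIcc, hk⟩ := hex
  have hfibpos : 0 < (S.filter fun d => f d = k).card := by
    have h1 : (0:ℝ) < ((S.filter fun d => f d = k).card : ℝ) := lt_of_lt_of_le htgtpos hk
    exact_mod_cast h1
  obtain ⟨d₀, hd₀⟩ := Finset.card_pos.mp hfibpos
  rw [Finset.mem_filter] at hd₀
  obtain ⟨hd₀S, hfd₀⟩ := hd₀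
  refine ⟨k, hfd₀ ▸ hf1 d₀ hd₀S, hfd₀ ▸ hf2 d₀ hd₀S, hfd₀ ▸ hf3 d₀ hd₀S, ?_⟩
  refine le_trans hk ?_
  have hsub : (S.filter fun d => f d = k) ⊆
      L₁.divisors.filter (fun d => d.primeFactors.card = m ∧ (d*k*ν+1).Prime) := by
    intro d hd
    rw [Finset.mem_filter] at hd
    obtain ⟨hdS, hfd⟩ := hd
    have hdS' := hdS
    rw [hS_def, Finset.mem_filter] at hdS'
    rw [Finset.mem_filter]
    exact ⟨hdS'.1, hdS'.2, hfd ▸ hf4 d hdS⟩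
  exact_mod_cast Nat.cast_le.mpr (Finset.card_le_card hsub)
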